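/- Let A and B be bounded self-adjoint operators on a complex Hilbert space with A, B ≤ 0 (negative) and both invertible, and let λ ≥ 0 be a real scalar. Then the inequality (λ·I − A − B)⁻¹ ≤ (λ·I − A)⁻¹ + (λ·I − B)⁻¹ holds if and only if A(λ·I − B)⁻¹A + B(λ·I − A)⁻¹B + λ·I − 2(A + B) ≥ 0. -/

import Mathlib

set_option maxHeartbeats 1000000

theorem soc_subadditivity_resolvent_iff
    {H : Type*} [NormedAddCommGroup H] [InnerProductSpace ℂ H] [CompleteSpace H]
    (A B : H →L[ℂ] H) (hA : IsSelfAdjoint A) (hB : IsSelfAdjoint B)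
    (hAneg : A ≤ 0) (hBneg : B ≤ 0) (hAinv : IsUnit A) (hBinv : IsUnit B)
    (lam : ℝ) (hlam : 0 ≤ lam) :
    Ring.inverse (lam • (1 : H →L[ℂ] H) - A - B) ≤
      Ring.inverse (lam • (1 : H →L[ℂ] H) - A) + Ring.inverse (lam • (1 : H →L[ℂ] H) - B) ↔
    0 ≤ A * Ring.inverse (lam • (1 : H →L[ℂ] H) - B) * A +
        B * Ring.inverse (lam • (1 : H →L[ℂ] H) - A) * B +
        lam • (1 : H →L[ℂ] H) - 2 • (A + B) := by
  -- positivity of lam • 1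
  have h1 : (0 : H →L[ℂ] H) ≤ lam • 1 := by
    have key : lam • (1 : H →L[ℂ] H) =
        star (Real.sqrt lam • (1 : H →L[ℂ] H)) * (Real.sqrt lam • (1 : H →L[ℂ] H)) := by
      rw [star_smul, star_trivial, star_one, smul_mul_smul_comm, one_mul,
        Real.mul_self_sqrt hlam]
    rw [key]
    exact star_mul_self_nonneg _
  have hnA : (0 : H →L[ℂ] H) ≤ -A := neg_nonneg.2 hAneg
  have hnB : (0 : H →L[ℂ] H) ≤ -B := neg_nonneg.2 hBneg
  set P : H →L[ℂ] H := lam • (1 : H →L[ℂ] H) - A with hPdef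
  set Q : H →L[ℂ] H := lam • (1 : H →L[ℂ] H) - B with hQdef
  set C : H →L[ℂ] H := lam • (1 : H →L[ℂ] H) - A - B with hCdef
  -- invertibility
  have hPunit : IsUnit P := by
    refine CStarAlgebra.isUnit_of_le (-A) ?_ ⟨hnA, hAinv.neg⟩
    rw [← sub_nonneg]
    have : P - -A = lam • (1 : H →L[ℂ] H) := by rw [hPdef]; abel
    rwa [this]
  have hQunit : IsUnit Q := by
    refine CStarAlgebra.isUnit_of_le (-B) ?_ ⟨hnB, hBinv.neg⟩
    rw [← sub_nonneg]
    have : Q - -B = lam • (1 : H →L[ℂ] H) := by rw [hQdef]; abel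
    rwa [this]
  have hCunit : IsUnit C := by
    have hAB : IsUnit (-A + -B) :=
      CStarAlgebra.isUnit_of_le (-A) (le_add_of_nonneg_right hnB) ⟨hnA, hAinv.neg⟩
    refine CStarAlgebra.isUnit_of_le (-A + -B) ?_ ⟨add_nonneg hnA hnB, hAB⟩
    rw [← sub_nonneg]
    have : C - (-A + -B) = lam • (1 : H →L[ℂ] H) := by rw [hCdef]; abel
    rwa [this]
  -- selfadjointness of C
  have hsmul_sa : IsSelfAdjoint (lam • (1 : H →L[ℂ] H)) := by
    rw [IsSelfAdjoint, star_smul, star_trivial, star_one]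
  have hCsa : IsSelfAdjoint C := ((hsmul_sa.sub hA).sub hB)
  set p : H →L[ℂ] H := Ring.inverse P with hpdef
  set q : H →L[ℂ] H := Ring.inverse Q with hqdef
  set c : H →L[ℂ] H := Ring.inverse C with hcdef
  have hcsa : IsSelfAdjoint c := by
    rw [hcdef, IsSelfAdjoint, ← Ring.inverse_star, hCsa.star_eq]
  have hPp : P * p = 1 := Ring.mul_inverse_cancel _ hPunit
  have hpP : p * P = 1 := Ring.inverse_mul_cancel _ hPunit
  have hQq : Q * q = 1 := Ring.mul_inverse_cancel _ hQunit
  have hqQ : q * Q = 1 := Ring.inverse_mul_cancel _ hQunit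
  have hCc : C * c = 1 := Ring.mul_inverse_cancel _ hCunit
  have hcC : c * C = 1 := Ring.inverse_mul_cancel _ hCunit
  -- key algebraic identity
  have e1 : C * p * C = P - B - B + B * p * B := by
    have hCPB : C = P - B := by rw [hCdef, hPdef]
    calc C * p * C = (P - B) * p * (P - B) := by rw [hCPB]
      _ = (P * p) * P - (P * p) * B - B * (p * P) + B * p * B := by noncomm_ring
      _ = P - B - B + B * p * B := by rw [hPp, hpP]; noncomm_ring
  have e2 : C * q * C = Q - A - A + A * q * A := by
    have hCQA : C = Q - A := by rw [hCdef, hQdef]; abel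
    calc C * q * C = (Q - A) * q * (Q - A) := by rw [hCQA]
      _ = (Q * q) * Q - (Q * q) * A - A * (q * Q) + A * q * A := by noncomm_ring
      _ = Q - A - A + A * q * A := by rw [hQq, hqQ]; noncomm_ring
  have key : C * (p + q - c) * C =
      A * q * A + B * p * B + lam • (1 : H →L[ℂ] H) - 2 • (A + B) := by
    have e3 : C * (p + q - c) * C = C * p * C + C * q * C - (C * c) * C := by noncomm_ring
    rw [e3, hCc] at *
    rw [e1, e2, one_mul, hPdef, hQdef, hCdef]
    abel
  rw [← sub_nonneg]
  constructor
  · intro h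
    have h2 := star_left_conjugate_nonneg h C
    rw [hCsa.star_eq] at h2
    rwa [key] at h2
  · intro h
    rw [← key] at h
    have h2 := star_left_conjugate_nonneg h c
    rw [hcsa.star_eq] at h2
    have e4 : c * (C * (p + q - c) * C) * c = (c * C) * (p + q - c) * (C * c) := by
      noncomm_ring
    rwa [e4, hcC, hCc, one_mul, mul_one] at h2
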